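/- Let S be a finite nonempty set and F : S → ℝ_{≥0}. Let A = (1/|S|) Σ_{x∈S} F(x), M = max_{x∈S} F(x), and suppose Σ_{x∈S} F(x)^2 = A^2|S| + R. Then for every k ≥ 1 there is a constant c_k depending only on k (e.g. c_k = 2^{k^2}) such that Σ_{x∈S} F(x)^{k+1} ≤ c_k (M^{k-1} R + A^{k+1} |S|). -/

import Mathlib

/-- Lifting an `L²` estimate to an `L^{k+1}` estimate: if `A` is the average of a
nonnegative function `F` on a finite nonempty set `S`, `M` its maximum, and
`∑ F(x)² = A²|S| + R`, then `∑ F(x)^{k+1} ≤ c_k (M^{k-1} R + A^{k+1} |S|)` for a constant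
`c_k` depending only on `k`. -/
theorem lift_L2_to_Lk (k : ℕ) (hk : 1 ≤ k) :
    ∃ c : ℝ, 0 < c ∧
      ∀ (α : Type) (S : Finset α) (_hS : S.Nonempty) (F : α → ℝ),
        (∀ x ∈ S, 0 ≤ F x) →
        ∀ (A M R : ℝ),
          A = (∑ x ∈ S, F x) / S.card →
          (∀ x ∈ S, F x ≤ M) → (∃ x ∈ S, F x = M) →
          (∑ x ∈ S, F x ^ 2) = A ^ 2 * S.card + R →
          (∑ x ∈ S, F x ^ (k + 1)) ≤ c * (M ^ (k - 1) * R + A ^ (k + 1) * S.card) := by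
  classical
  refine ⟨2 ^ (k + 1) + 4, by positivity, ?_⟩
  intro α S hS F hF A M R hA hM hMmem hRdef
  have hcard : (0 : ℝ) < S.card := by exact_mod_cast Finset.card_pos.mpr hS
  have hsum : ∑ x ∈ S, F x = A * S.card := by
    rw [hA]; field_simp
  have hA0 : 0 ≤ A := by
    rw [hA]
    exact div_nonneg (Finset.sum_nonneg hF) hcard.le
  have hM0 : 0 ≤ M := by
    obtain ⟨x, hx, hxM⟩ := hMmem
    exact hxM ▸ hF x hx
  have hRsq : R = ∑ x ∈ S, (F x - A) ^ 2 := by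
    have expand : ∑ x ∈ S, (F x - A) ^ 2
        = (∑ x ∈ S, F x ^ 2) - 2 * A * (∑ x ∈ S, F x) + A ^ 2 * S.card := by
      rw [Finset.mul_sum, ← Finset.sum_sub_distrib]
      rw [show A ^ 2 * (S.card : ℝ) = ∑ _x ∈ S, A ^ 2 by
        rw [Finset.sum_const, nsmul_eq_mul]; ring]
      rw [← Finset.sum_add_distrib]
      exact Finset.sum_congr rfl fun x _ => by ring
    rw [expand, hsum, hRdef]; ring
  have hR0 : 0 ≤ R := hRsq ▸ Finset.sum_nonneg fun x _ => sq_nonneg _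
  -- split the sum
  rw [← Finset.sum_filter_add_sum_filter_not S (fun x => F x ≤ 2 * A)]
  have h1 : ∑ x ∈ S.filter (fun x => F x ≤ 2 * A), F x ^ (k + 1)
      ≤ 2 ^ (k + 1) * A ^ (k + 1) * S.card := by
    calc ∑ x ∈ S.filter (fun x => F x ≤ 2 * A), F x ^ (k + 1)
        ≤ ∑ _x ∈ S.filter (fun x => F x ≤ 2 * A), (2 * A) ^ (k + 1) := by
          refine Finset.sum_le_sum fun x hx => ?_
          obtain ⟨hxS, hx2⟩ := Finset.mem_filter.mp hx
          exact pow_le_pow_left₀ (hF x hxS) hx2 _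
      _ = (S.filter (fun x => F x ≤ 2 * A)).card * (2 * A) ^ (k + 1) := by
          rw [Finset.sum_const, nsmul_eq_mul]
      _ ≤ S.card * (2 * A) ^ (k + 1) := by
          apply mul_le_mul_of_nonneg_right _ (by positivity)
          exact_mod_cast Finset.card_filter_le S _
      _ = 2 ^ (k + 1) * A ^ (k + 1) * S.card := by rw [mul_pow]; ring
  have h2 : ∑ x ∈ S.filter (fun x => ¬ F x ≤ 2 * A), F x ^ (k + 1)
      ≤ 4 * M ^ (k - 1) * R := by
    calc ∑ x ∈ S.filter (fun x => ¬ F x ≤ 2 * A), F x ^ (k + 1)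
        ≤ ∑ x ∈ S.filter (fun x => ¬ F x ≤ 2 * A), M ^ (k - 1) * (4 * (F x - A) ^ 2) := by
          refine Finset.sum_le_sum fun x hx => ?_
          obtain ⟨hxS, hx2⟩ := Finset.mem_filter.mp hx
          push_neg at hx2
          have hFx0 : 0 ≤ F x := hF x hxS
          have hsplit : F x ^ (k + 1) = F x ^ (k - 1) * F x ^ 2 := by
            rw [← pow_add]
            congr 1
            omega
          rw [hsplit]
          have hp1 : F x ^ (k - 1) ≤ M ^ (k - 1) := pow_le_pow_left₀ hFx0 (hM x hxS) _
          have hp2 : F x ^ 2 ≤ 4 * (F x - A) ^ 2 := by nlinarith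
          exact mul_le_mul hp1 hp2 (by positivity) (by positivity)
      _ = M ^ (k - 1) * 4 * ∑ x ∈ S.filter (fun x => ¬ F x ≤ 2 * A), (F x - A) ^ 2 := by
          rw [Finset.mul_sum]
          exact Finset.sum_congr rfl fun x _ => by ring
      _ ≤ M ^ (k - 1) * 4 * ∑ x ∈ S, (F x - A) ^ 2 := by
          apply mul_le_mul_of_nonneg_left _ (by positivity)
          exact Finset.sum_le_sum_of_subset_of_nonneg (Finset.filter_subset _ _)
            (fun x _ _ => sq_nonneg _)
      _ = 4 * M ^ (k - 1) * R := by rw [← hRsq]; ring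
  have hMR : 0 ≤ M ^ (k - 1) * R := by positivity
  have hAc : 0 ≤ A ^ (k + 1) * S.card := mul_nonneg (pow_nonneg hA0 _) hcard.le
  have h2k : (1 : ℝ) ≤ 2 ^ (k + 1) := one_le_pow₀ (by norm_num)
  nlinarith [h1, h2, hMR, hAc]
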